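/- Sum-of-squares representation of the lower-bound objective: for every x ∈ ℓ², ∑_{i=1}^n f_i(x) = (n(L − μ)/(12ρ)) · [ ∑_{l=1}^∞ (ρ x_l − x_{l+1})² + (x_1 − ρ)² + ρ − ρ² ]. -/

import Mathlib

open scoped BigOperators

/-- The real Hilbert space `ℓ²` of square-summable sequences (indexed from `0`; the paper's
coordinate `l ≥ 1` corresponds to the index `l - 1`). -/
abbrev ell2 : Type := lp (fun _ : ℕ => ℝ) 2

/-- The function stored at the nodes of `V₁`:
`f(x) = (μ/2)‖x‖² + ((L−μ)/4)[(x_1 − 1)² + ∑_{l≥1} (x_{2l} − x_{2l+1})²]` (paper coordinates). -/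
noncomputable def fNodeV1 (μ L : ℝ) (x : ell2) : ℝ :=
  (μ / 2) * ‖x‖ ^ 2 +
    ((L - μ) / 4) * ((x 0 - 1) ^ 2 + ∑' l : ℕ, (x (2 * l + 1) - x (2 * l + 2)) ^ 2)

/-- The function stored at the nodes of `V₂`: `f(x) = (μ/2)‖x‖²`. -/
noncomputable def fNodeV2 (μ : ℝ) (x : ell2) : ℝ := (μ / 2) * ‖x‖ ^ 2

/-- The function stored at the nodes of `V₃`:
`f(x) = (μ/2)‖x‖² + ((L−μ)/4) ∑_{l≥1} (x_{2l−1} − x_{2l})²` (paper coordinates). -/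
noncomputable def fNodeV3 (μ L : ℝ) (x : ell2) : ℝ :=
  (μ / 2) * ‖x‖ ^ 2 + ((L - μ) / 4) * ∑' l : ℕ, (x (2 * l) - x (2 * l + 1)) ^ 2

/-- The function `f_i` for node `i ∈ {1, …, n}` with `n = 3m`:
nodes `1 … m` form `V₁`, nodes `m+1 … 2m` form `V₂`, nodes `2m+1 … 3m` form `V₃`. -/
noncomputable def fNode (μ L : ℝ) (m i : ℕ) (x : ell2) : ℝ :=
  if i ≤ m then fNodeV1 μ L x else if i ≤ 2 * m then fNodeV2 μ x else fNodeV3 μ L x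

lemma ell2_norm_sq_eq (x : ell2) : ‖x‖^2 = ∑' l, (x l)^2 := by
  have h := lp.norm_rpow_eq_tsum (p := 2) (by norm_num) x
  simp only [ENNReal.toReal_ofNat] at h
  rw [show ((2:ℝ)) = ((2:ℕ):ℝ) by norm_num, Real.rpow_natCast] at h
  rw [h]
  congr 1; funext l
  rw [Real.rpow_natCast]
  simp [Real.norm_eq_abs, sq_abs]

lemma ell2_sq_summable (x : ell2) : Summable (fun l => (x l)^2) := by
  have h := (lp.memℓp x).summable (p := 2) (by norm_num)
  simp only [ENNReal.toReal_ofNat] at h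
  convert h using 2 with l
  rw [show (2:ℝ) = ((2:ℕ):ℝ) by norm_num, Real.rpow_natCast]
  simp [Real.norm_eq_abs, sq_abs]

set_option maxHeartbeats 1600000 in
/-- **Sum-of-squares representation of the lower-bound objective.**
For every `x ∈ ℓ²`,
`∑_{i=1}^n f_i(x) = (n(L − μ)/(12ρ)) [∑_{l≥1} (ρ x_l − x_{l+1})² + (x_1 − ρ)² + ρ − ρ²]`
(paper coordinates). -/
theorem lower_bound_objective_sum_of_squares (μ L : ℝ) (hμ : 0 < μ) (hμL : μ < L)
    (ρ : ℝ)
    (hρ : ρ = (Real.sqrt (2 * L / (3 * μ) + 1 / 3) - 1) /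
      (Real.sqrt (2 * L / (3 * μ) + 1 / 3) + 1))
    (m : ℕ) (hm : 1 ≤ m) (x : ell2) :
    (∑ i ∈ Finset.Icc 1 (3 * m), fNode μ L m i x) =
      ((3 * m : ℝ) * (L - μ) / (12 * ρ)) *
        ((∑' l : ℕ, (ρ * x l - x (l + 1)) ^ 2) + (x 0 - ρ) ^ 2 + ρ - ρ ^ 2) := by
  -- ρ facts
  have hL : (0:ℝ) < L := hμ.trans hμL
  set s := Real.sqrt (2 * L / (3 * μ) + 1 / 3) with hs
  have harg : (0:ℝ) ≤ 2 * L / (3 * μ) + 1 / 3 := by positivity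
  have hsq : s ^ 2 = 2 * L / (3 * μ) + 1 / 3 := Real.sq_sqrt harg
  have hsq' : 3 * μ * s ^ 2 = 2 * L + μ := by
    field_simp at hsq; linarith
  have hs0 : 0 ≤ s := Real.sqrt_nonneg _
  have h2 : 1 < s ^ 2 := by
    have h3 : 2/3 < 2*L/(3*μ) := by
      rw [lt_div_iff₀ (by linarith : (0:ℝ) < 3*μ)]; linarith
    linarith [hsq]
  have hs1 : 1 < s := by nlinarith
  have hρpos : 0 < ρ := by
    rw [hρ]; exact div_pos (by linarith) (by linarith)
  have hkey : (1 - ρ) ^ 2 * (L - μ) = 6 * μ * ρ := by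
    rw [hρ]
    have h1 : s + 1 ≠ 0 := by linarith
    field_simp
    ring_nf
    nlinarith [hsq']
  -- summability
  have hS : Summable (fun l => (x l)^2) := ell2_sq_summable x
  have hS1 : Summable (fun l => (x (l+1))^2) := (summable_nat_add_iff 1).2 hS
  have habs : Summable (fun l => |x l * x (l+1)|) := by
    refine Summable.of_nonneg_of_le (fun l => abs_nonneg _) (fun l => ?_)
      ((hS.add hS1).mul_left (1/2))
    rw [abs_mul]
    nlinarith [sq_nonneg (|x l| - |x (l+1)|), sq_abs (x l), sq_abs (x (l+1))]
  have ha : Summable (fun l => x l * x (l+1)) := habs.of_abs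
  set S := ∑' l, (x l)^2 with hSdef
  set A := ∑' l, x l * x (l+1) with hAdef
  have hshift : ∑' l, (x (l+1))^2 = S - (x 0)^2 := by
    have := Summable.tsum_eq_zero_add hS
    rw [hSdef]; linarith [this]
  -- sum of squared differences
  have hdiffsum : Summable (fun l => (x l - x (l+1))^2) :=
    (((hS.add hS1).sub (ha.mul_left 2)).congr (fun l => by ring))
  have hT : ∑' l, (x l - x (l+1))^2 = S + (S - (x 0)^2) - 2*A := by
    have h1 : ∑' l, (x l - x (l+1))^2
        = ∑' l, (((x l)^2 + (x (l+1))^2) - 2*(x l * x (l+1))) :=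
      tsum_congr (fun l => by ring)
    rw [h1, Summable.tsum_sub (hS.add hS1) (ha.mul_left 2),
      Summable.tsum_add hS hS1, tsum_mul_left, hshift]
  have hTρ : ∑' l, (ρ * x l - x (l+1))^2 = ρ^2 * S + (S - (x 0)^2) - 2*ρ*A := by
    have h1 : ∑' l, (ρ * x l - x (l+1))^2
        = ∑' l, ((ρ^2 * (x l)^2 + (x (l+1))^2) - (2*ρ)*(x l * x (l+1))) :=
      tsum_congr (fun l => by ring)
    rw [h1, Summable.tsum_sub ((hS.mul_left (ρ^2)).add hS1) (ha.mul_left (2*ρ)),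
      Summable.tsum_add (hS.mul_left (ρ^2)) hS1, tsum_mul_left, tsum_mul_left, hshift]
  -- even/odd split
  have hEven : Summable (fun l => (x (2*l) - x (2*l+1))^2) :=
    hdiffsum.comp_injective (fun a b h => by omega)
  have hOdd : Summable (fun l => (x (2*l+1) - x (2*l+2))^2) := by
    have := hdiffsum.comp_injective (i := fun l => 2*l+1) (fun a b h => by dsimp only at h; omega)
    exact this.congr (fun l => by
      show (x (2*l+1) - x (2*l+1+1))^2 = _
      norm_num [add_assoc])
  have heo : (∑' l, (x (2*l) - x (2*l+1))^2) + (∑' l, (x (2*l+1) - x (2*l+2))^2)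
      = 2*S - (x 0)^2 - 2*A := by
    have hfun : (fun l => (x (2*l+1) - x (2*l+2))^2)
        = (fun l : ℕ => (x (2*l+1) - x (2*l+1+1))^2) := by
      funext l; norm_num [add_assoc]
    have h2 : HasSum (fun l => (x l - x (l+1))^2)
        ((∑' l, (x (2*l) - x (2*l+1))^2) + (∑' l, (x (2*l+1) - x (2*l+2))^2)) :=
      HasSum.even_add_odd hEven.hasSum (hfun ▸ hOdd.hasSum)
    have h3 := h2.tsum_eq
    rw [hT] at h3
    linarith [h3]
  -- finite sum
  have e1 : ∀ i ∈ Finset.Ioc 0 m, fNode μ L m i x = fNodeV1 μ L x := by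
    intro i hi; simp only [Finset.mem_Ioc] at hi
    simp [fNode, hi.2]
  have e2 : ∀ i ∈ Finset.Ioc m (2*m), fNode μ L m i x = fNodeV2 μ x := by
    intro i hi; simp only [Finset.mem_Ioc] at hi
    simp [fNode, Nat.not_le.2 hi.1, hi.2]
  have e3 : ∀ i ∈ Finset.Ioc (2*m) (3*m), fNode μ L m i x = fNodeV3 μ L x := by
    intro i hi; simp only [Finset.mem_Ioc] at hi
    have h1 : ¬ i ≤ m := by omega
    have h2 : ¬ i ≤ 2*m := by omega
    simp [fNode, h1, h2]
  have hsplit : ∑ i ∈ Finset.Icc 1 (3 * m), fNode μ L m i x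
      = m * fNodeV1 μ L x + m * fNodeV2 μ x + m * fNodeV3 μ L x := by
    rw [show Finset.Icc 1 (3*m) = Finset.Ioc 0 (3*m) from by
      rw [← Finset.Icc_add_one_left_eq_Ioc]; rfl]
    rw [← Finset.sum_Ioc_consecutive _ (show 0 ≤ 2*m by omega) (show 2*m ≤ 3*m by omega),
      ← Finset.sum_Ioc_consecutive _ (show 0 ≤ m by omega) (show m ≤ 2*m by omega)]
    rw [Finset.sum_congr rfl e1, Finset.sum_congr rfl e2, Finset.sum_congr rfl e3,
      Finset.sum_const, Finset.sum_const, Finset.sum_const, Nat.card_Ioc, Nat.card_Ioc,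
      Nat.card_Ioc]
    have e : (2*m - m : ℕ) = m := by omega
    have e' : (3*m - 2*m : ℕ) = m := by omega
    rw [e, e', Nat.sub_zero]
    simp only [nsmul_eq_mul]
  rw [hsplit, hTρ]
  unfold fNodeV1 fNodeV2 fNodeV3
  rw [ell2_norm_sq_eq x, ← hSdef]
  rw [eq_comm, div_mul_eq_mul_div, div_eq_iff (show (12:ℝ)*ρ ≠ 0 by positivity)]
  linear_combination (3*(m:ℝ)*S) * hkey - 3*(m:ℝ)*ρ*(L-μ) * heo
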